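/- Every finite poset of order dimension at most 2 has a downset lattice admitting a bijective valuation, i.e., a function v : L → ℕ of the form v(A) = Σ_{x∈A} w(x) for some w : P → ℕ, which is a bijection onto {0,…,|L|-1}. -/

import Mathlib

open Finset

variable (P : Type*) [PartialOrder P] [Fintype P] [DecidableEq P]

/-- The lattice of downsets (lower sets) of a finite poset `P`. -/
def DownSet : Type _ := {A : Finset P // IsLowerSet (↑A : Set P)}

variable {P}

instance : Lattice (DownSet P) :=
  Subtype.lattice (fun _ _ hA hB => by simpa [Finset.sup_eq_union] using hA.union hB)
    (fun _ _ hA hB => by simpa [Finset.inf_eq_inter] using hA.inter hB)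

instance : OrderBot (DownSet P) :=
  Subtype.orderBot (by simp [Finset.bot_eq_empty, isLowerSet_empty])

noncomputable instance : Fintype (DownSet P) :=
  Fintype.ofInjective Subtype.val Subtype.val_injective

/-- The valuation associated to a weight function `w`. -/
def vval (w : P → ℕ) (A : DownSet P) : ℕ := ∑ x ∈ A.1, w x

variable [DecidableRel ((· ≤ ·) : P → P → Prop)]

/-- The principal downset of `y`. -/
def pd (y : P) : DownSet P :=
  ⟨univ.filter (· ≤ y), by
    intro a b hba ha
    simp only [coe_filter, Set.mem_setOf_eq, mem_univ, true_and] at *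
    exact hba.trans ha⟩

/-- The dual valuation evaluated on the principal upset of `x`. -/
def vup (w : P → ℕ) (x : P) : ℕ := ∑ z ∈ univ.filter (fun z => x ≤ z), w z

/-- `T` is an initial segment for the valuation `v`. -/
def Initial (v : DownSet P → ℕ) (T : Set (DownSet P)) : Prop :=
  ∃ j, v '' T = {k | k < j}

/-- `T` is a final segment for the valuation `v`. -/
def Final (v : DownSet P → ℕ) (T : Set (DownSet P)) : Prop :=
  ∃ j, v '' T = {k | j ≤ k ∧ k < Fintype.card (DownSet P)}

/-- The set of arbitrary (nonempty) joins of elements of `T`. -/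
def joinSet (T : Set (DownSet P)) : Set (DownSet P) :=
  {a | ∃ S : Finset (DownSet P), ↑S ⊆ T ∧ ∃ hS : S.Nonempty, a = S.sup' hS id}

/-- The set of arbitrary (nonempty) meets of elements of `T`. -/
def meetSet (T : Set (DownSet P)) : Set (DownSet P) :=
  {a | ∃ S : Finset (DownSet P), ↑S ⊆ T ∧ ∃ hS : S.Nonempty, a = S.inf' hS id}

/-- A complete valuation: bijective onto `{0,…,|L|-1}`, join-closures of initial segments
are initial segments, meet-closures of final segments are final segments. -/
def IsCompleteValuation (w : P → ℕ) : Prop :=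
  Set.BijOn (vval w) Set.univ {k | k < Fintype.card (DownSet P)} ∧
  (∀ T, Initial (vval w) T → Initial (vval w) (joinSet T)) ∧
  (∀ T, Final (vval w) T → Final (vval w) (meetSet T))

/-- The complementary order from two linear orders: `x ≤' y` iff `le1 x y` and `le2 y x`. -/
def le'' (le1 le2 : P → P → Prop) (x y : P) : Prop := le1 x y ∧ le2 y x

/-- The number of chains (under the complementary order) with maximum element `y`. -/
noncomputable def chainCount (le1 le2 : P → P → Prop) (y : P) : ℕ :=
  Set.ncard {C : Finset P | y ∈ C ∧ (∀ a ∈ C, le'' le1 le2 a y) ∧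
    ∀ a ∈ C, ∀ b ∈ C, le'' le1 le2 a b ∨ le'' le1 le2 b a}

/-- `{le1, le2}` is a realizer of `P`. -/
def IsRealizer (le1 le2 : P → P → Prop) : Prop :=
  IsLinearOrder P le1 ∧ IsLinearOrder P le2 ∧ ∀ x y : P, x ≤ y ↔ le1 x y ∧ le2 x y


set_option linter.unusedSectionVars false

section Aux99

variable {P : Type*} [PartialOrder P] [DecidableEq P]
  [DecidableRel ((· ≤ ·) : P → P → Prop)]

def le99 (le1 le2 : P → P → Prop) (x y : P) : Prop := le1 x y ∧ le2 y x

variable (le1 le2 : P → P → Prop)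

/-- downsets of the subposet S, as finsets -/
def myDSet (S : Finset P) : Finset (Finset P) :=
  S.powerset.filter (fun A => ∀ a ∈ S, ∀ b ∈ A, a ≤ b → a ∈ A)

lemma mem_myDSet {S A : Finset P} :
    A ∈ myDSet S ↔ A ⊆ S ∧ ∀ a ∈ S, ∀ b ∈ A, a ≤ b → a ∈ A := by
  simp [myDSet]

noncomputable def chainFinset (T : Finset P) : Finset (Finset P) :=
  @Finset.filter _ (fun C => ∀ a ∈ C, ∀ b ∈ C, le99 le1 le2 a b ∨ le99 le1 le2 b a)
    (Classical.decPred _) T.powerset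

lemma mem_chainFinset {T C : Finset P} :
    C ∈ chainFinset le1 le2 T ↔
      C ⊆ T ∧ ∀ a ∈ C, ∀ b ∈ C, le99 le1 le2 a b ∨ le99 le1 le2 b a := by
  rw [chainFinset, @Finset.mem_filter _ _ (Classical.decPred _), Finset.mem_powerset]

noncomputable def lowSet (S : Finset P) (y : P) : Finset P :=
  @Finset.filter _ (fun a => le99 le1 le2 a y) (Classical.decPred _) (S.erase y)

lemma mem_lowSet {S : Finset P} {y a : P} :
    a ∈ lowSet le1 le2 S y ↔ (a ∈ S ∧ a ≠ y) ∧ le99 le1 le2 a y := by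
  rw [lowSet, @Finset.mem_filter _ _ (Classical.decPred _), Finset.mem_erase, and_comm (a := a ≠ y)]

noncomputable def myW (S : Finset P) (y : P) : ℕ :=
  (chainFinset le1 le2 (lowSet le1 le2 S y)).card

noncomputable def maxElems (D : Finset P) : Finset P :=
  @Finset.filter _ (fun b => ∀ a ∈ D, ¬ b < a) (Classical.decPred _) D

lemma mem_maxElems {D : Finset P} {b : P} :
    b ∈ maxElems D ↔ b ∈ D ∧ ∀ a ∈ D, ¬ b < a := by
  rw [maxElems, @Finset.mem_filter _ _ (Classical.decPred _)]

def downCl (T C : Finset P) : Finset P := T.filter (fun a => ∃ b ∈ C, a ≤ b)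

lemma mem_downCl {T C : Finset P} {a : P} :
    a ∈ downCl T C ↔ a ∈ T ∧ ∃ b ∈ C, a ≤ b := by
  rw [downCl, Finset.mem_filter]

variable {le1 le2}

section Realizer

variable (hR : IsLinearOrder P le1 ∧ IsLinearOrder P le2 ∧
    ∀ x y : P, x ≤ y ↔ le1 x y ∧ le2 x y)

include hR in
lemma comp_of_incomp {a b : P} (hab : ¬ a ≤ b) (hba : ¬ b ≤ a) :
    le99 le1 le2 a b ∨ le99 le1 le2 b a := by
  obtain ⟨h1, h2, hiff⟩ := hR
  rcases h1.toTotal.total a b with h | h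
  · left
    refine ⟨h, ?_⟩
    rcases h2.toTotal.total b a with h' | h'
    · exact h'
    · exact absurd ((hiff a b).2 ⟨h, h'⟩) hab
  · right
    refine ⟨h, ?_⟩
    rcases h2.toTotal.total a b with h' | h'
    · exact h'
    · exact absurd ((hiff b a).2 ⟨h, h'⟩) hba

include hR in
lemma incomp_of_comp {a b : P} (hne : a ≠ b)
    (h : le99 le1 le2 a b ∨ le99 le1 le2 b a) : ¬ a ≤ b ∧ ¬ b ≤ a := by
  obtain ⟨h1, h2, hiff⟩ := hR
  rcases h with ⟨ha1, ha2⟩ | ⟨ha1, ha2⟩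
  · constructor
    · intro hle
      exact hne (h2.toIsPartialOrder.toAntisymm.antisymm _ _ ((hiff a b).1 hle).2 ha2)
    · intro hle
      exact hne (h1.toIsPartialOrder.toAntisymm.antisymm _ _ ha1 ((hiff b a).1 hle).1)
  · constructor
    · intro hle
      exact hne (h1.toIsPartialOrder.toAntisymm.antisymm _ _ ((hiff a b).1 hle).1 ha1)
    · intro hle
      exact hne (h2.toIsPartialOrder.toAntisymm.antisymm _ _ ha2 ((hiff b a).1 hle).2)

include hR in
lemma card_chainFinset (T : Finset P) :
    (chainFinset le1 le2 T).card = (myDSet T).card := by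
  apply Finset.card_bij' (i := fun C _ => downCl T C) (j := fun D _ => maxElems D)
  · -- i maps into myDSet T
    intro C hC
    rw [mem_chainFinset] at hC
    rw [mem_myDSet]
    refine ⟨Finset.filter_subset _ _, ?_⟩
    intro a ha b hb hab
    rw [mem_downCl] at hb ⊢
    obtain ⟨hbT, c, hc, hbc⟩ := hb
    exact ⟨ha, c, hc, hab.trans hbc⟩
  · -- j maps into chainFinset T
    intro D hD
    rw [mem_myDSet] at hD
    rw [mem_chainFinset]
    constructor
    · intro x hx
      exact hD.1 (mem_maxElems.1 hx).1
    · intro a ha b hb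
      rw [mem_maxElems] at ha hb
      rcases eq_or_ne a b with rfl | hne
      · left; exact ⟨(hR.1.toIsPartialOrder.toIsPreorder.toRefl.refl a),
          (hR.2.1.toIsPartialOrder.toIsPreorder.toRefl.refl a)⟩
      · apply comp_of_incomp hR
        · intro hle
          exact ha.2 b hb.1 (lt_of_le_of_ne hle hne)
        · intro hle
          exact hb.2 a ha.1 (lt_of_le_of_ne hle (Ne.symm hne))
  · -- j ∘ i = id
    intro C hC
    rw [mem_chainFinset] at hC
    obtain ⟨hCT, hchain⟩ := hC
    ext c
    rw [mem_maxElems]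
    constructor
    · rintro ⟨hc1, hmax⟩
      rw [mem_downCl] at hc1
      obtain ⟨hcT, b, hb, hcb⟩ := hc1
      rcases eq_or_ne c b with rfl | hne
      · exact hb
      · exfalso
        exact hmax b (mem_downCl.2 ⟨hCT hb, b, hb, le_refl b⟩) (lt_of_le_of_ne hcb hne)
    · intro hc
      refine ⟨mem_downCl.2 ⟨hCT hc, c, hc, le_refl c⟩, ?_⟩
      intro a ha hca
      rw [mem_downCl] at ha
      obtain ⟨haT, b, hb, hab⟩ := ha
      have hcb : c < b := lt_of_lt_of_le hca hab
      have := incomp_of_comp hR (ne_of_lt hcb) (hchain c hc b hb)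
      exact this.1 hcb.le
  · -- i ∘ j = id
    intro D hD
    rw [mem_myDSet] at hD
    ext d
    rw [mem_downCl]
    constructor
    · rintro ⟨hdT, b, hb, hdb⟩
      rw [mem_maxElems] at hb
      exact hD.2 d hdT b hb.1 hdb
    · intro hd
      refine ⟨hD.1 hd, ?_⟩
      have hne : (D.filter (fun x => d ≤ x)).Nonempty := ⟨d, by simp [hd]⟩
      obtain ⟨m, hm, hmax⟩ : ∃ m ∈ D.filter (fun x => d ≤ x), ∀ x ∈ D.filter (fun x => d ≤ x), ¬ m < x := by
        obtain ⟨m, hm⟩ := Finset.exists_maximal hne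
        exact ⟨m, hm.1, fun x hx hlt => lt_irrefl m (lt_of_lt_of_le hlt (hm.2 hx hlt.le))⟩
      rw [Finset.mem_filter] at hm
      refine ⟨m, ?_, hm.2⟩
      rw [mem_maxElems]
      refine ⟨hm.1, ?_⟩
      intro a ha hma
      exact hmax a (Finset.mem_filter.2 ⟨ha, hm.2.trans hma.le⟩) hma





lemma exists_le2_min (h2 : IsLinearOrder P le2) (S : Finset P) :
    S.Nonempty → ∃ x0 ∈ S, ∀ y ∈ S, le2 x0 y := by
  refine Finset.induction_on S (by intro h; simp at h) ?_
  intro a s _ ih _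
  rcases s.eq_empty_or_nonempty with rfl | hs
  · exact ⟨a, Finset.mem_insert_self a _, by
      intro y hy
      rw [Finset.mem_insert] at hy
      rcases hy with rfl | hy
      · exact h2.toIsPartialOrder.toIsPreorder.toRefl.refl _
      · simp at hy⟩
  · obtain ⟨x0, hx0, hmin⟩ := ih hs
    rcases h2.toTotal.total a x0 with h | h
    · refine ⟨a, Finset.mem_insert_self a _, ?_⟩
      intro y hy
      rcases Finset.mem_insert.1 hy with rfl | hy
      · exact h2.toIsPartialOrder.toIsPreorder.toRefl.refl _
      · exact h2.toIsPartialOrder.toIsPreorder.toIsTrans.trans _ _ _ h (hmin y hy)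
    · refine ⟨x0, Finset.mem_insert_of_mem hx0, ?_⟩
      intro y hy
      rcases Finset.mem_insert.1 hy with rfl | hy
      · exact h
      · exact hmin y hy

include hR in
lemma myMain : ∀ S : Finset P,
    (myDSet S).image (fun A => ∑ x ∈ A, myW le1 le2 S x) = Finset.range (myDSet S).card := by
  intro S
  induction S using Finset.strongInduction with
  | _ S ih =>
  obtain ⟨h1, h2, hiff⟩ := hR
  have t1 := h1.toTotal.total
  have a1 : ∀ a b : P, le1 a b → le1 b a → a = b := h1.toIsPartialOrder.toAntisymm.antisymm
  have a2 : ∀ a b : P, le2 a b → le2 b a → a = b := h2.toIsPartialOrder.toAntisymm.antisymm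
  have tr1 : ∀ a b c : P, le1 a b → le1 b c → le1 a c :=
    h1.toIsPartialOrder.toIsPreorder.toIsTrans.trans
  rcases S.eq_empty_or_nonempty with rfl | hSne
  · have : myDSet (∅ : Finset P) = {∅} := by
      ext A
      simp [mem_myDSet, Finset.subset_empty]
    rw [this]
    simp
  obtain ⟨x0, hx0S, hx0min⟩ := exists_le2_min h2 S hSne
  set S' := S.erase x0 with hS'def
  set W := @Finset.filter _ (fun y => le1 y x0) (Classical.decPred _) S' with hWdef
  have hmemW : ∀ y, y ∈ W ↔ (y ∈ S ∧ y ≠ x0) ∧ le1 y x0 := by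
    intro y
    rw [hWdef, @Finset.mem_filter _ _ (Classical.decPred _), hS'def, Finset.mem_erase,
      and_comm (a := y ≠ x0)]
  have hWS : W ⊆ S := fun y hy => ((hmemW y).1 hy).1.1
  have hS'S : S' ⊆ S := Finset.erase_subset _ _
  have hne_x0 : ∀ {y}, y ∈ S → le2 y x0 → y = x0 := fun hy h => a2 _ _ h (hx0min _ hy)
  -- split of downsets
  have hsub1 : myDSet W ⊆ myDSet S := by
    intro A hA
    rw [mem_myDSet] at hA ⊢
    refine ⟨hA.1.trans hWS, ?_⟩
    intro a ha b hb hab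
    have hbW := hA.1 hb
    have hb1 : le1 b x0 := ((hmemW b).1 hbW).2
    have ha1 : le1 a x0 := tr1 _ _ _ ((hiff a b).1 hab).1 hb1
    have hax0 : a ≠ x0 := by
      rintro rfl
      exact ((hmemW b).1 hbW).1.2 (a1 _ _ hb1 ((hiff _ b).1 hab).1)
    exact hA.2 a ((hmemW a).2 ⟨⟨ha, hax0⟩, ha1⟩) b hb hab
  have hins : ∀ E ∈ myDSet S', insert x0 E ∈ myDSet S := by
    intro E hE
    rw [mem_myDSet] at hE ⊢
    constructor
    · intro x hx
      rcases Finset.mem_insert.1 hx with rfl | hx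
      · exact hx0S
      · exact hS'S (hE.1 hx)
    · intro a ha b hb hab
      rcases Finset.mem_insert.1 hb with rfl | hb
      · have : a = b := hne_x0 ha ((hiff a b).1 hab).2
        rw [this]
        exact Finset.mem_insert_self _ _
      · rcases eq_or_ne a x0 with rfl | hax
        · exact Finset.mem_insert_self _ _
        · exact Finset.mem_insert_of_mem
            (hE.2 a (Finset.mem_erase.2 ⟨hax, ha⟩) b hb hab)
  have hsplit : myDSet S = myDSet W ∪ (myDSet S').image (insert x0) := by
    ext D
    constructor
    · intro hD
      have hD' := mem_myDSet.1 hD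
      by_cases hx : x0 ∈ D
      · refine Finset.mem_union_right _ (Finset.mem_image.2 ⟨D.erase x0, ?_, Finset.insert_erase hx⟩)
        rw [mem_myDSet]
        refine ⟨Finset.erase_subset_erase _ hD'.1, ?_⟩
        intro a ha b hb hab
        rw [Finset.mem_erase] at ha hb ⊢
        exact ⟨ha.1, hD'.2 a (hS'S (Finset.mem_erase.2 ha)) b hb.2 hab⟩
      · apply Finset.mem_union_left
        rw [mem_myDSet]
        have hDW : D ⊆ W := by
          intro b hb
          have hbS : b ∈ S := hD'.1 hb
          have hbx : b ≠ x0 := by rintro rfl; exact hx hb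
          rw [hmemW]
          refine ⟨⟨hbS, hbx⟩, ?_⟩
          rcases t1 b x0 with h | h
          · exact h
          · exfalso
            exact hx (hD'.2 x0 hx0S b hb ((hiff x0 b).2 ⟨h, hx0min b hbS⟩))
        exact ⟨hDW, fun a ha b hb hab => hD'.2 a (hWS ha) b hb hab⟩
    · intro hD
      rcases Finset.mem_union.1 hD with hD | hD
      · exact hsub1 hD
      · obtain ⟨E, hE, rfl⟩ := Finset.mem_image.1 hD
        exact hins E hE
  have hx0notW : x0 ∉ W := fun h => ((hmemW x0).1 h).1.2 rfl
  have hdisj : Disjoint (myDSet W) ((myDSet S').image (insert x0)) := by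
    rw [Finset.disjoint_left]
    intro D hD hD'
    obtain ⟨E, _, rfl⟩ := Finset.mem_image.1 hD'
    exact hx0notW ((mem_myDSet.1 hD).1 (Finset.mem_insert_self _ _))
  have hx0notin : ∀ E ∈ myDSet S', x0 ∉ E := by
    intro E hE h
    exact Finset.notMem_erase x0 S ((mem_myDSet.1 hE).1 h)
  have hinj : Set.InjOn (insert x0) (myDSet S' : Set (Finset P)) := by
    intro E hE F hF hEF
    have := congrArg (Finset.erase · x0) hEF
    simpa [Finset.erase_insert (hx0notin E hE), Finset.erase_insert (hx0notin F hF)] using this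
  have hcard : (myDSet S).card = (myDSet W).card + (myDSet S').card := by
    rw [hsplit, Finset.card_union_of_disjoint hdisj, Finset.card_image_of_injOn hinj]
  -- weight coherence
  have hlow1 : ∀ y ∈ S', lowSet le1 le2 S y = lowSet le1 le2 S' y := by
    intro y hy
    ext a
    rw [mem_lowSet, mem_lowSet]
    constructor
    · rintro ⟨⟨haS, hay⟩, h99⟩
      have hax : a ≠ x0 := by
        rintro rfl
        exact (Finset.mem_erase.1 hy).1 (hne_x0 (hS'S hy) h99.2)
      exact ⟨⟨Finset.mem_erase.2 ⟨hax, haS⟩, hay⟩, h99⟩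
    · rintro ⟨⟨haS', hay⟩, h99⟩
      exact ⟨⟨hS'S haS', hay⟩, h99⟩
  have hlow2 : ∀ y ∈ W, lowSet le1 le2 S y = lowSet le1 le2 W y := by
    intro y hy
    ext a
    rw [mem_lowSet, mem_lowSet]
    constructor
    · rintro ⟨⟨haS, hay⟩, h99⟩
      have hax : a ≠ x0 := by
        rintro rfl
        exact ((hmemW y).1 hy).1.2 (hne_x0 (hWS hy) h99.2)
      have : a ∈ W := (hmemW a).2 ⟨⟨haS, hax⟩, tr1 _ _ _ h99.1 ((hmemW y).1 hy).2⟩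
      exact ⟨⟨this, hay⟩, h99⟩
    · rintro ⟨⟨haW, hay⟩, h99⟩
      exact ⟨⟨hWS haW, hay⟩, h99⟩
  have hw1 : ∀ y ∈ S', myW le1 le2 S y = myW le1 le2 S' y := by
    intro y hy
    rw [myW, myW, hlow1 y hy]
  have hw2 : ∀ y ∈ W, myW le1 le2 S y = myW le1 le2 W y := by
    intro y hy
    rw [myW, myW, hlow2 y hy]
  have hlow0 : lowSet le1 le2 S x0 = W := by
    ext a
    rw [mem_lowSet, hmemW]
    constructor
    · rintro ⟨⟨haS, hax⟩, h99⟩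
      exact ⟨⟨haS, hax⟩, h99.1⟩
    · rintro ⟨⟨haS, hax⟩, h1a⟩
      exact ⟨⟨haS, hax⟩, h1a, hx0min a haS⟩
  have hw0 : myW le1 le2 S x0 = (myDSet W).card := by
    rw [myW, hlow0, card_chainFinset ⟨h1, h2, hiff⟩]
  -- induction hypotheses
  have hWss : W ⊂ S := Finset.ssubset_of_subset_of_ssubset
    (show W ⊆ S' from fun y hy => Finset.mem_erase.2 ⟨((hmemW y).1 hy).1.2, ((hmemW y).1 hy).1.1⟩)
    (Finset.erase_ssubset hx0S)
  have hS'ss : S' ⊂ S := Finset.erase_ssubset hx0S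
  have ihW := ih W hWss
  have ihS' := ih S' hS'ss
  -- compute images
  have himW : (myDSet W).image (fun A => ∑ x ∈ A, myW le1 le2 S x)
      = Finset.range (myDSet W).card := by
    rw [← ihW]
    apply Finset.image_congr
    intro A hA
    exact Finset.sum_congr rfl fun x hx => hw2 x ((mem_myDSet.1 hA).1 hx)
  have himIns : ((myDSet S').image (insert x0)).image (fun A => ∑ x ∈ A, myW le1 le2 S x)
      = (Finset.range (myDSet S').card).image (fun n => (myDSet W).card + n) := by
    rw [Finset.image_image, ← ihS', Finset.image_image]
    apply Finset.image_congr
    intro E hE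
    show ∑ x ∈ insert x0 E, myW le1 le2 S x = (myDSet W).card + ∑ x ∈ E, myW le1 le2 S' x
    rw [Finset.sum_insert (hx0notin E hE), hw0]
    congr 1
    exact Finset.sum_congr rfl fun x hx => hw1 x ((mem_myDSet.1 hE).1 hx)
  rw [hsplit, Finset.image_union, himW, himIns, Finset.card_union_of_disjoint hdisj,
    Finset.card_image_of_injOn hinj]
  ext n
  simp only [Finset.mem_union, Finset.mem_range, Finset.mem_image]
  constructor
  · rintro (h | ⟨m, hm, rfl⟩) <;> omega
  · intro h
    rcases lt_or_ge n (myDSet W).card with h' | h'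
    · exact Or.inl h'
    · exact Or.inr ⟨n - (myDSet W).card, by omega, by omega⟩

end Realizer

end Aux99

/-- Every finite poset of order dimension at most 2 has a downset lattice admitting
a bijective valuation. -/
theorem stmt9 (h : ∃ le1 le2 : P → P → Prop, IsRealizer le1 le2) :
    ∃ w : P → ℕ, Set.BijOn (vval w) Set.univ {k | k < Fintype.card (DownSet P)} := by
  obtain ⟨le1, le2, hR⟩ := h
  have hR' : IsLinearOrder P le1 ∧ IsLinearOrder P le2 ∧
      ∀ x y : P, x ≤ y ↔ le1 x y ∧ le2 x y := hR
  refine ⟨myW le1 le2 Finset.univ, ?_⟩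
  have hmain := myMain hR' Finset.univ
  have hA1 : ∀ A : DownSet P, A.1 ∈ myDSet (Finset.univ : Finset P) := fun A =>
    mem_myDSet.2 ⟨Finset.subset_univ _, fun a _ b hb hab => A.2 hab hb⟩
  have hcardN : Fintype.card (DownSet P) = (myDSet (Finset.univ : Finset P)).card := by
    have e : DownSet P ≃ {A : Finset P // A ∈ myDSet (Finset.univ : Finset P)} :=
      { toFun := fun A => ⟨A.1, hA1 A⟩
        invFun := fun B => ⟨B.1, fun x y hyx hx =>
          (mem_myDSet.1 B.2).2 y (Finset.mem_univ _) x hx hyx⟩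
        left_inv := fun A => Subtype.ext rfl
        right_inv := fun B => Subtype.ext rfl }
    rw [Fintype.card_congr e, Fintype.card_coe]
  refine ⟨?_, ?_, ?_⟩
  · intro A _
    have hmem : vval (myW le1 le2 Finset.univ) A ∈
        Finset.range (myDSet (Finset.univ : Finset P)).card := by
      rw [← hmain]
      exact Finset.mem_image_of_mem _ (hA1 A)
    have := Finset.mem_range.1 hmem
    simp only [Set.mem_setOf_eq]
    omega
  · intro A _ B _ hAB
    have hinj : Set.InjOn (fun A : Finset P => ∑ x ∈ A, myW le1 le2 Finset.univ x)
        ↑(myDSet (Finset.univ : Finset P)) :=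
      Finset.injOn_of_card_image_eq (by rw [hmain, Finset.card_range])
    exact Subtype.ext (hinj (hA1 A) (hA1 B) hAB)
  · intro k hk
    have hk' : k ∈ Finset.range (myDSet (Finset.univ : Finset P)).card :=
      Finset.mem_range.2 (by rw [← hcardN]; exact hk)
    rw [← hmain] at hk'
    obtain ⟨A, hA, hvA⟩ := Finset.mem_image.1 hk'
    refine ⟨⟨A, ?_⟩, Set.mem_univ _, hvA⟩
    intro x y hyx hx
    exact (mem_myDSet.1 hA).2 y (Finset.mem_univ _) x hx hyx
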